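/- Let α ∈ [1/3, 1) and define ψ(x) = x + α (1 − x^2)/(1 − α x) for x ∈ [0, 1]. Then the maximum of ψ over [0, 1] is attained at x₁ = (1 − √(1 − α²)/√2)/α, and for all x ∈ [0, 1] one has ψ(x) ≤ (3 − 2√2 · √(1 − α²))/α. -/

import Mathlib

/-- For `1/3 ≤ α < 1`, the function `ψ(x) = x + α(1-x²)/(1-αx)` on `[0,1]` attains its
maximum at `x₁ = (1 - √(1-α²)/√2)/α`, and `ψ(x) ≤ (3 - 2√2 √(1-α²))/α` on `[0,1]`. -/
theorem psi_max (α : ℝ) (hα : 1 / 3 ≤ α) (hα1 : α < 1)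
    (ψ : ℝ → ℝ) (hψ : ∀ x : ℝ, ψ x = x + α * (1 - x ^ 2) / (1 - α * x))
    (x₁ : ℝ) (hx₁ : x₁ = (1 - Real.sqrt (1 - α ^ 2) / Real.sqrt 2) / α) :
    x₁ ∈ Set.Icc (0 : ℝ) 1 ∧
    (∀ x ∈ Set.Icc (0 : ℝ) 1, ψ x ≤ ψ x₁) ∧
    (∀ x ∈ Set.Icc (0 : ℝ) 1,
      ψ x ≤ (3 - 2 * Real.sqrt 2 * Real.sqrt (1 - α ^ 2)) / α) := by
  have hα0 : (0:ℝ) < α := lt_of_lt_of_le (by norm_num) hα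
  set s := Real.sqrt (1 - α ^ 2) with hs_def
  have hs2 : s ^ 2 = 1 - α ^ 2 := Real.sq_sqrt (by nlinarith)
  have hs0 : 0 < s := Real.sqrt_pos.mpr (by nlinarith)
  have h2 : (Real.sqrt 2) ^ 2 = 2 := Real.sq_sqrt (by norm_num)
  have h20 : 0 < Real.sqrt 2 := Real.sqrt_pos.mpr (by norm_num)
  have hs1 : s < 1 := by nlinarith
  -- s ≥ √2 (1-α)
  have hkey : Real.sqrt 2 * (1 - α) ≤ s := by
    nlinarith [sq_nonneg (s - Real.sqrt 2 * (1 - α)), sq_nonneg (s + Real.sqrt 2 * (1 - α)),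
      mul_pos h20 (sub_pos.mpr hα1)]
  have hslt : s < Real.sqrt 2 := by nlinarith
  have hx₁0 : 0 ≤ x₁ := by
    rw [hx₁]
    apply div_nonneg _ hα0.le
    rw [sub_nonneg, div_le_one h20]
    linarith
  have hx₁1 : x₁ ≤ 1 := by
    rw [hx₁, div_le_one hα0]
    rw [sub_le_iff_le_add]
    rw [← sub_le_iff_le_add', le_div_iff₀ h20]
    nlinarith
  -- bound lemma
  have hbound : ∀ x ∈ Set.Icc (0:ℝ) 1, ψ x ≤ (3 - 2 * Real.sqrt 2 * s) / α := by
    rintro x ⟨hx0, hx1⟩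
    have ht : 0 < 1 - α * x := by nlinarith
    rw [hψ]
    have hc : x + α * (1 - x ^ 2) / (1 - α * x)
        = (x * (1 - α * x) + α * (1 - x ^ 2)) / (1 - α * x) := by
      rw [add_div, mul_div_cancel_right₀ _ ht.ne']
    rw [hc, div_le_div_iff₀ ht hα0]
    have hid : (3 - 2 * Real.sqrt 2 * s) * (1 - α * x) - (x * (1 - α * x) + α * (1 - x ^ 2)) * α
        = (Real.sqrt 2 * (1 - α * x) - s) ^ 2 := by
      linear_combination -(1 - α * x) ^ 2 * h2 - hs2
    nlinarith [sq_nonneg (Real.sqrt 2 * (1 - α * x) - s)]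
  -- equality at x₁
  have hαx₁ : α * x₁ = 1 - s / Real.sqrt 2 := by
    rw [hx₁]; field_simp
  have ht₁ : 1 - α * x₁ = s / Real.sqrt 2 := by rw [hαx₁]; ring
  have hψx₁ : ψ x₁ = (3 - 2 * Real.sqrt 2 * s) / α := by
    rw [hψ, ht₁]
    have hx₁v : x₁ = (1 - s / Real.sqrt 2) / α := hx₁
    rw [hx₁v]
    field_simp
    ring_nf
    linear_combination (2 * s ^ 2 - 1 + α ^ 2) * h2 + 2 * hs2
  refine ⟨⟨hx₁0, hx₁1⟩, ?_, hbound⟩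
  intro x hx
  rw [hψx₁]
  exact hbound x hx
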